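/- For any two disjoint bounded convex polygons P and Q in the plane, there are at most 4 distinct lines each of which is tangent to (i.e., supports without crossing the interior of) both P and Q. -/

import Mathlib

open Set

/-- A non-vertical line in the plane represented by (slope, intercept). -/
def lineSet (l : ℝ × ℝ) : Set (ℝ × ℝ) := {p | p.2 = l.1 * p.1 + l.2}

/-- General position: pairwise distinct slopes (hence no two parallel, none vertical
by the representation) and no three concurrent. -/
def GenPos (F : Finset (ℝ × ℝ)) : Prop :=
  (∀ l₁ ∈ F, ∀ l₂ ∈ F, l₁ ≠ l₂ → l₁.1 ≠ l₂.1) ∧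
  (∀ l₁ ∈ F, ∀ l₂ ∈ F, ∀ l₃ ∈ F, l₁ ≠ l₂ → l₁ ≠ l₃ → l₂ ≠ l₃ →
    ¬ ∃ p, p ∈ lineSet l₁ ∧ p ∈ lineSet l₂ ∧ p ∈ lineSet l₃)

/-- Intersection point of two non-parallel lines. -/
noncomputable def interPt (l₁ l₂ : ℝ × ℝ) : ℝ × ℝ :=
  ((l₂.2 - l₁.2) / (l₁.1 - l₂.1),
   l₁.1 * ((l₂.2 - l₁.2) / (l₁.1 - l₂.1)) + l₁.2)

/-- The point `p` lies strictly below the line `l` (the line is strictly above `p`). -/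
def Below (p : ℝ × ℝ) (l : ℝ × ℝ) : Prop := p.2 < l.1 * p.1 + l.2

/-- The point `p` lies strictly above the line `l` (the line is strictly below `p`). -/
def Above (p : ℝ × ℝ) (l : ℝ × ℝ) : Prop := p.2 > l.1 * p.1 + l.2

/-- A sequence of lines ordered by strictly increasing slope forms a cup: each
intermediate line lies strictly above the intersection of its two neighbours. -/
def IsCup {k : ℕ} (a : Fin k → ℝ × ℝ) : Prop :=
  StrictMono (fun i => (a i).1) ∧
  ∀ i : Fin k, ∀ _h1 : 0 < (i : ℕ), ∀ h2 : (i : ℕ) + 1 < k,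
    Below (interPt (a ⟨(i : ℕ) - 1, by omega⟩) (a ⟨(i : ℕ) + 1, h2⟩)) (a i)

/-- A sequence of lines ordered by strictly increasing slope forms a cap: each
intermediate line lies strictly below the intersection of its two neighbours. -/
def IsCap {k : ℕ} (a : Fin k → ℝ × ℝ) : Prop :=
  StrictMono (fun i => (a i).1) ∧
  ∀ i : Fin k, ∀ _h1 : 0 < (i : ℕ), ∀ h2 : (i : ℕ) + 1 < k,
    Above (interPt (a ⟨(i : ℕ) - 1, by omega⟩) (a ⟨(i : ℕ) + 1, h2⟩)) (a i)

/-- `F` contains `k` lines forming a `k`-cup. -/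
def HasCup (k : ℕ) (F : Finset (ℝ × ℝ)) : Prop :=
  ∃ a : Fin k → ℝ × ℝ, (∀ i, a i ∈ F) ∧ IsCup a

/-- `F` contains `l` lines forming an `l`-cap. -/
def HasCap (l : ℕ) (F : Finset (ℝ × ℝ)) : Prop :=
  ∃ a : Fin l → ℝ × ℝ, (∀ i, a i ∈ F) ∧ IsCap a

/-- Union of the lines of a family. -/
def linesUnion (F : Finset (ℝ × ℝ)) : Set (ℝ × ℝ) := ⋃ l ∈ F, lineSet l

/-- `P` is a cell of the arrangement of `F`: a connected component of the
complement of the union of the lines. -/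
def IsCellOf (F : Finset (ℝ × ℝ)) (P : Set (ℝ × ℝ)) : Prop :=
  ∃ p ∈ (linesUnion F)ᶜ, P = connectedComponentIn (linesUnion F)ᶜ p

/-- The line `l` contributes a (positive length) segment to the boundary of `P`:
the closure of `P` meets `l` in more than one point. -/
def Contributes (l : ℝ × ℝ) (P : Set (ℝ × ℝ)) : Prop :=
  ∃ p q : ℝ × ℝ, p ≠ q ∧ p ∈ closure P ∩ lineSet l ∧ q ∈ closure P ∩ lineSet l

/-- `P` is a cell of the arrangement of `F` with a boundary segment on every line of `F`. -/
def IsNCell (F : Finset (ℝ × ℝ)) (P : Set (ℝ × ℝ)) : Prop :=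
  IsCellOf F P ∧ ∀ l ∈ F, Contributes l P

/-- The lines of `F` are in convex position: they define a cell bounded by all of them. -/
def ConvexPos (F : Finset (ℝ × ℝ)) : Prop := ∃ P, IsNCell F P
/-- `L` is a line of the plane (general position not assumed here). -/
def IsLine (L : Set (ℝ × ℝ)) : Prop :=
  ∃ a b c : ℝ, (a, b) ≠ ((0 : ℝ), (0 : ℝ)) ∧ L = {p : ℝ × ℝ | a * p.1 + b * p.2 = c}

/-- `L` is tangent to the convex body `K`: it meets `K` but not its interior. -/
def IsTangentLine (L K : Set (ℝ × ℝ)) : Prop :=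
  (L ∩ K).Nonempty ∧ L ∩ interior K = ∅

section Helpers
lemma line_eq_of_two_pts {L L' : Set (ℝ×ℝ)} (hL : IsLine L) (hL' : IsLine L')
    {u v : ℝ×ℝ} (huv : u ≠ v) (huL : u ∈ L) (hvL : v ∈ L) (huL' : u ∈ L') (hvL' : v ∈ L') :
    L = L' := by
  obtain ⟨a, b, c, hab, rfl⟩ := hL
  obtain ⟨a', b', c', hab', rfl⟩ := hL'
  simp only [Set.mem_setOf_eq] at huL hvL huL' hvL'
  have hab2 : ¬(a = 0 ∧ b = 0) := by
    intro h; exact hab (by simp [Prod.ext_iff, h.1, h.2])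
  have hab2' : ¬(a' = 0 ∧ b' = 0) := by
    intro h; exact hab' (by simp [Prod.ext_iff, h.1, h.2])
  have hd : ¬(v.1 - u.1 = 0 ∧ v.2 - u.2 = 0) := by
    intro h; exact huv (Prod.ext_iff.2 ⟨by linarith [h.1], by linarith [h.2]⟩).symm
  have e1 : a*(v.1-u.1) + b*(v.2-u.2) = 0 := by linarith
  have e2 : a'*(v.1-u.1) + b'*(v.2-u.2) = 0 := by linarith
  have hcross : a*b' = a'*b := by
    rcases not_and_or.1 hd with h | h
    · -- v.1 - u.1 ≠ 0
      have : (a*b' - a'*b)*(v.1-u.1) = b'*(a*(v.1-u.1) + b*(v.2-u.2)) - b*(a'*(v.1-u.1) + b'*(v.2-u.2)) := by ring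
      rw [e1, e2] at this; simp at this
      rcases this with h' | h'
      · linarith
      · exact absurd h' h
    · have : (a*b' - a'*b)*(v.2-u.2) = a*(a'*(v.1-u.1) + b'*(v.2-u.2)) - a'*(a*(v.1-u.1) + b*(v.2-u.2)) := by ring
      rw [e1, e2] at this; simp at this
      rcases this with h' | h'
      · linarith
      · exact absurd h' h
  obtain ⟨t, ht, ha', hb', hc'⟩ : ∃ t : ℝ, t ≠ 0 ∧ a' = t*a ∧ b' = t*b ∧ c' = t*c := by
    rcases not_and_or.1 hab2 with h | h
    · refine ⟨a'/a, ?_, by field_simp, ?_, ?_⟩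
      · intro h0
        have ha0 : a' = 0 := by field_simp at h0; simpa using h0
        have hb0 : b' = 0 := by
          have := hcross; rw [ha0] at this; simp at this
          rcases this with h' | h' <;> first | linarith | exact absurd h' h
        exact hab2' ⟨ha0, hb0⟩
      · field_simp; linarith [hcross]
      · field_simp
        linear_combination -a*huL' + a'*huL + u.2*hcross
    · refine ⟨b'/b, ?_, ?_, by field_simp, ?_⟩
      · intro h0
        have hb0 : b' = 0 := by field_simp at h0; simpa using h0
        have ha0 : a' = 0 := by
          have := hcross; rw [hb0] at this; simp at this
          rcases this with h' | h' <;> first | linarith | exact absurd h' h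
        exact hab2' ⟨ha0, hb0⟩
      · field_simp; nlinarith [hcross]
      · field_simp
        linear_combination -b*huL' + b'*huL - u.1*hcross
  ext p
  simp only [Set.mem_setOf_eq, ha', hb', hc']
  constructor
  · intro h; linear_combination t*h
  · intro h
    have h2 : t*(a*p.1 + b*p.2) = t*c := by linarith
    exact mul_left_cancel₀ ht h2

lemma combo_eq {A B c t : ℝ} (hA : A ≤ c) (hB : B ≤ c) (ht0 : 0 < t) (ht1 : t < 1)
    (h : (1-t)*A + t*B = c) : A = c ∧ B = c := by
  constructor
  · nlinarith [mul_nonneg ht0.le (sub_nonneg.2 hB)]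
  · nlinarith [mul_nonneg (by linarith : (0:ℝ) ≤ 1 - t) (sub_nonneg.2 hA)]

lemma side_aux {K : Set (ℝ×ℝ)} (hK : Convex ℝ K) (a b c : ℝ)
    (hne : ∀ z ∈ interior K, a*z.1+b*z.2 ≠ c)
    {q : ℝ×ℝ} (hq : q ∈ interior K) (hqc : a*q.1+b*q.2 < c) :
    ∀ p ∈ K, a*p.1+b*p.2 ≤ c := by
  intro p hp
  by_contra hpc
  push_neg at hpc
  set t : ℝ := (c - (a*q.1+b*q.2))/((a*p.1+b*p.2) - (a*q.1+b*q.2)) with hT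
  have hden : 0 < (a*p.1+b*p.2) - (a*q.1+b*q.2) := by linarith
  have ht0 : 0 < t := div_pos (by linarith) hden
  have ht1 : t < 1 := (div_lt_one hden).2 (by linarith)
  have hz : (1-t) • q + t • p ∈ interior K :=
    hK.combo_interior_closure_mem_interior hq (subset_closure hp) (by linarith) ht0.le (by ring)
  apply hne _ hz
  have h1 : ((1-t) • q + t • p).1 = (1-t)*q.1 + t*p.1 := rfl
  have h2 : ((1-t) • q + t • p).2 = (1-t)*q.2 + t*p.2 := rfl
  rw [h1, h2, hT]
  field_simp
  ring

lemma tangent_normal {K : Set (ℝ×ℝ)} (hK : Convex ℝ K) (hKint : (interior K).Nonempty)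
    (a b c : ℝ) (hd : {p : ℝ×ℝ | a*p.1+b*p.2 = c} ∩ interior K = ∅) :
    (∀ p ∈ K, a*p.1+b*p.2 ≤ c) ∨ (∀ p ∈ K, c ≤ a*p.1+b*p.2) := by
  obtain ⟨p₀, hp₀⟩ := hKint
  have hne : ∀ z ∈ interior K, a*z.1+b*z.2 ≠ c := by
    intro z hz hzc
    have : z ∈ {p : ℝ×ℝ | a*p.1+b*p.2 = c} ∩ interior K := ⟨hzc, hz⟩
    rw [hd] at this; exact this
  have hne' : ∀ z ∈ interior K, (-a)*z.1+(-b)*z.2 ≠ -c := by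
    intro z hz h; exact hne z hz (by linarith)
  rcases (hne p₀ hp₀).lt_or_gt with h | h
  · exact Or.inl (side_aux hK a b c hne hp₀ h)
  · right
    intro p hp
    have := side_aux hK (-a) (-b) (-c) hne' hp₀ (by linarith) p hp
    linarith


lemma middle_reals {r1 r2 r3 : ℝ} (h12 : r1 ≠ r2) (h13 : r1 ≠ r3) (h23 : r2 ≠ r3) :
    0 < (r1-r2)*(r3-r1) ∨ 0 < (r2-r1)*(r3-r2) ∨ 0 < (r3-r1)*(r2-r3) := by
  rcases lt_trichotomy r1 r2 with h | h | h
  · rcases lt_trichotomy r2 r3 with g | g | g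
    · right; left; nlinarith
    · exact absurd g h23
    · rcases lt_trichotomy r1 r3 with f | f | f
      · right; right; nlinarith
      · exact absurd f h13
      · left; nlinarith
  · exact absurd h h12
  · rcases lt_trichotomy r3 r2 with g | g | g
    · right; left; nlinarith
    · exact absurd g.symm h23
    · rcases lt_trichotomy r3 r1 with f | f | f
      · right; right; nlinarith
      · exact absurd f.symm h13
      · left; nlinarith

lemma innerKey {ni nj nk : ℝ×ℝ} {ci cj : ℝ} {si sj sk : ℝ}
    (hr1 : si*ni.1 + sj*nj.1 + sk*nk.1 = 0)
    (hr2 : si*ni.2 + sj*nj.2 + sk*nk.2 = 0)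
    (hsi : 0 < si) (hsj : 0 < sj)
    (hdet : ni.1*nj.2 - ni.2*nj.1 ≠ 0)
    {xk yk : ℝ×ℝ} (hxy : xk ≠ yk)
    (hk : nk.1*xk.1+nk.2*xk.2 = nk.1*yk.1+nk.2*yk.2)
    (hiP : ni.1*xk.1+ni.2*xk.2 ≤ ci) (hiQ : ci ≤ ni.1*yk.1+ni.2*yk.2)
    (hjP : nj.1*xk.1+nj.2*xk.2 ≤ cj) (hjQ : cj ≤ nj.1*yk.1+nj.2*yk.2) : False := by
  have hk0 : nk.1*(xk.1-yk.1) + nk.2*(xk.2-yk.2) = 0 := by linear_combination hk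
  have hi0 : ni.1*(xk.1-yk.1) + ni.2*(xk.2-yk.2) ≤ 0 := by linarith
  have hj0 : nj.1*(xk.1-yk.1) + nj.2*(xk.2-yk.2) ≤ 0 := by linarith
  have hsum : si*(ni.1*(xk.1-yk.1)+ni.2*(xk.2-yk.2)) + sj*(nj.1*(xk.1-yk.1)+nj.2*(xk.2-yk.2))
      + sk*(nk.1*(xk.1-yk.1)+nk.2*(xk.2-yk.2)) = 0 := by
    linear_combination (xk.1-yk.1)*hr1 + (xk.2-yk.2)*hr2
  have h3 : sk*(nk.1*(xk.1-yk.1)+nk.2*(xk.2-yk.2)) = 0 := by rw [hk0]; ring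
  have h1 : si*(ni.1*(xk.1-yk.1)+ni.2*(xk.2-yk.2)) ≤ 0 := by nlinarith
  have h2 : sj*(nj.1*(xk.1-yk.1)+nj.2*(xk.2-yk.2)) ≤ 0 := by nlinarith
  have h1' : si*(ni.1*(xk.1-yk.1)+ni.2*(xk.2-yk.2)) = 0 := by linarith
  have h2' : sj*(nj.1*(xk.1-yk.1)+nj.2*(xk.2-yk.2)) = 0 := by linarith
  have hieq : ni.1*(xk.1-yk.1)+ni.2*(xk.2-yk.2) = 0 :=
    (mul_eq_zero.1 h1').resolve_left (ne_of_gt hsi)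
  have hjeq : nj.1*(xk.1-yk.1)+nj.2*(xk.2-yk.2) = 0 :=
    (mul_eq_zero.1 h2').resolve_left (ne_of_gt hsj)
  have hw1 : (ni.1*nj.2 - ni.2*nj.1)*(xk.1-yk.1) = 0 := by
    linear_combination nj.2*hieq - ni.2*hjeq
  have hw2 : (ni.1*nj.2 - ni.2*nj.1)*(xk.2-yk.2) = 0 := by
    linear_combination ni.1*hjeq - nj.1*hieq
  have w1 : xk.1 - yk.1 = 0 := (mul_eq_zero.1 hw1).resolve_left hdet
  have w2 : xk.2 - yk.2 = 0 := (mul_eq_zero.1 hw2).resolve_left hdet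
  exact hxy (Prod.ext_iff.2 ⟨by linarith, by linarith⟩)

lemma det_ne {P Q : Set (ℝ×ℝ)} {q₀ : ℝ×ℝ} (hq₀ : q₀ ∈ Q)
    {L1 L2 : Set (ℝ×ℝ)} (hne : L1 ≠ L2)
    {n1 n2 : ℝ×ℝ} {c1 c2 : ℝ} (hn1 : n1 ≠ 0) (hn2 : n2 ≠ 0)
    (hE1 : L1 = {p : ℝ×ℝ | n1.1*p.1+n1.2*p.2 = c1})
    (hE2 : L2 = {p : ℝ×ℝ | n2.1*p.1+n2.2*p.2 = c2})
    {x1 x2 : ℝ×ℝ} (hx1P : x1 ∈ P) (hx2P : x2 ∈ P)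
    (hx1 : n1.1*x1.1+n1.2*x1.2 = c1) (hx2 : n2.1*x2.1+n2.2*x2.2 = c2)
    (hP1 : ∀ p ∈ P, n1.1*p.1+n1.2*p.2 ≤ c1) (hP2 : ∀ p ∈ P, n2.1*p.1+n2.2*p.2 ≤ c2)
    (hQ2 : ∀ q ∈ Q, c2 ≤ n2.1*q.1+n2.2*q.2)
    (hs1 : c1 < n1.1*q₀.1+n1.2*q₀.2) :
    n1.1*n2.2 - n1.2*n2.1 ≠ 0 := by
  intro hdet
  have hn1' : ¬(n1.1 = 0 ∧ n1.2 = 0) := by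
    intro h; exact hn1 (Prod.ext_iff.2 ⟨h.1, h.2⟩)
  obtain ⟨lam, hl1, hl2⟩ : ∃ lam : ℝ, n2.1 = lam*n1.1 ∧ n2.2 = lam*n1.2 := by
    rcases not_and_or.1 hn1' with h | h
    · refine ⟨n2.1/n1.1, by field_simp, ?_⟩
      field_simp
      linear_combination hdet
    · refine ⟨n2.2/n1.2, ?_, by field_simp⟩
      field_simp
      linear_combination -hdet
  have hlam : lam ≠ 0 := by
    intro h0
    rw [h0] at hl1 hl2
    exact hn2 (Prod.ext_iff.2 ⟨by simpa using hl1, by simpa using hl2⟩)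
  -- key inequalities
  have ha : lam*c1 ≤ c2 := by
    have h := hP2 x1 hx1P
    rw [hl1, hl2] at h
    have hx1' : lam*(n1.1*x1.1+n1.2*x1.2) = lam*c1 := by rw [hx1]
    nlinarith [h, hx1']
  rcases hlam.lt_or_gt with hneg | hpos
  · -- lam < 0 : contradiction with q₀
    have hb : c2 ≤ lam*(n1.1*q₀.1+n1.2*q₀.2) := by
      have := hQ2 q₀ hq₀
      rw [hl1, hl2] at this
      linarith [this]
    nlinarith [mul_pos (neg_pos.2 hneg) (sub_pos.2 hs1)]
  · -- lam > 0 : lines are equal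
    have hb : c2 ≤ lam*c1 := by
      have h := hP1 x2 hx2P
      have h2 := mul_le_mul_of_nonneg_left h hpos.le
      rw [hl1, hl2] at hx2
      nlinarith [h2, hx2]
    have hc : c2 = lam*c1 := le_antisymm hb ha
    apply hne
    rw [hE1, hE2]
    ext p
    simp only [Set.mem_setOf_eq, hl1, hl2, hc]
    constructor
    · intro h; linear_combination lam*h
    · intro h
      have h2 : lam*(n1.1*p.1+n1.2*p.2) = lam*c1 := by linear_combination h
      exact mul_left_cancel₀ hlam h2

lemma outerKey {Lj : Set (ℝ×ℝ)} (hIj : IsLine Lj) {nj : ℝ×ℝ} {cj : ℝ}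
    (hEj : Lj = {p : ℝ×ℝ | nj.1*p.1+nj.2*p.2 = cj})
    {e1 e2 m : ℝ} (he : ¬(e1 = 0 ∧ e2 = 0))
    {zi zj zk xj : ℝ×ℝ}
    (hseg : zj ∈ openSegment ℝ zi zk) (hik : zi ≠ zk)
    (hzi : nj.1*zi.1+nj.2*zi.2 ≤ cj) (hzk : nj.1*zk.1+nj.2*zk.2 ≤ cj)
    (hzj : nj.1*zj.1+nj.2*zj.2 = cj)
    (hmi : e1*zi.1+e2*zi.2 = m) (hmk : e1*zk.1+e2*zk.2 = m)
    (hxj : xj ∈ Lj) (hfxj : e1*xj.1+e2*xj.2 ≠ m) : False := by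
  obtain ⟨a, b, ha, hb, hab, hcomb⟩ := hseg
  have h1 : zj.1 = a*zi.1+b*zk.1 := by rw [← hcomb]; rfl
  have h2 : zj.2 = a*zi.2+b*zk.2 := by rw [← hcomb]; rfl
  have ha' : a = 1 - b := by linarith
  obtain ⟨hi', hk'⟩ := combo_eq hzi hzk hb (by linarith)
    (by rw [h1, h2] at hzj; rw [← ha']; linear_combination hzj)
  have hMline : IsLine {p : ℝ×ℝ | e1*p.1+e2*p.2 = m} := by
    refine ⟨e1, e2, m, ?_, rfl⟩
    intro hh
    exact he ⟨congrArg Prod.fst hh, congrArg Prod.snd hh⟩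
  have hLjM : Lj = {p : ℝ×ℝ | e1*p.1+e2*p.2 = m} :=
    line_eq_of_two_pts hIj hMline hik (by rw [hEj]; exact hi') (by rw [hEj]; exact hk') hmi hmk
  rw [hLjM] at hxj
  exact hfxj hxj

lemma middle_z {e1 e2 m : ℝ} (he : ¬(e1 = 0 ∧ e2 = 0)) {z1 z2 z3 : ℝ×ℝ}
    (h1 : e1*z1.1+e2*z1.2 = m) (h2 : e1*z2.1+e2*z2.2 = m) (h3 : e1*z3.1+e2*z3.2 = m)
    (h12 : z1 ≠ z2) (h13 : z1 ≠ z3) (h23 : z2 ≠ z3) :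
    z1 ∈ openSegment ℝ z2 z3 ∨ z2 ∈ openSegment ℝ z1 z3 ∨ z3 ∈ openSegment ℝ z1 z2 := by
  by_cases he2 : e2 = 0
  · -- vertical-ish line: e1 ≠ 0, all first coords equal
    have he1 : e1 ≠ 0 := fun h => he ⟨h, he2⟩
    subst he2
    have k1 : z1.1 = m/e1 := by field_simp; linarith
    have k2 : z2.1 = m/e1 := by field_simp; linarith
    have k3 : z3.1 = m/e1 := by field_simp; linarith
    have build : ∀ za zb zc : ℝ×ℝ, za.1 = m/e1 → zb.1 = m/e1 → zc.1 = m/e1 →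
        0 < (zb.2 - za.2)*(zc.2 - zb.2) → zb ∈ openSegment ℝ za zc := by
      intro za zb zc ka kb kc hmid
      have hca : zc.2 - za.2 ≠ 0 := by
        intro h
        have hz : zc.2 = za.2 := by linarith
        rw [hz] at hmid
        nlinarith [sq_nonneg (zb.2 - za.2)]
      refine ⟨(zc.2 - zb.2)/(zc.2 - za.2), (zb.2 - za.2)/(zc.2 - za.2),
        div_pos_iff.2 (mul_pos_iff.1 (by nlinarith [hmid, sq_nonneg (zc.2 - zb.2)])),
        div_pos_iff.2 (mul_pos_iff.1 (by nlinarith [hmid, sq_nonneg (zb.2 - za.2)])), by field_simp; ring, ?_⟩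
      apply Prod.ext_iff.2
      constructor
      · show (zc.2 - zb.2)/(zc.2 - za.2)*za.1 + (zb.2 - za.2)/(zc.2 - za.2)*zc.1 = zb.1
        rw [ka, kb, kc]; field_simp; ring
      · show (zc.2 - zb.2)/(zc.2 - za.2)*za.2 + (zb.2 - za.2)/(zc.2 - za.2)*zc.2 = zb.2
        field_simp; ring
    have r12 : z1.2 ≠ z2.2 := fun h => h12 (Prod.ext_iff.2 ⟨by rw [k1, k2], h⟩)
    have r13 : z1.2 ≠ z3.2 := fun h => h13 (Prod.ext_iff.2 ⟨by rw [k1, k3], h⟩)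
    have r23 : z2.2 ≠ z3.2 := fun h => h23 (Prod.ext_iff.2 ⟨by rw [k2, k3], h⟩)
    rcases middle_reals r12 r13 r23 with h | h | h
    · exact Or.inl (build z2 z1 z3 k2 k1 k3 (by nlinarith))
    · exact Or.inr (Or.inl (build z1 z2 z3 k1 k2 k3 (by nlinarith)))
    · exact Or.inr (Or.inr (build z1 z3 z2 k1 k3 k2 (by nlinarith)))
  · -- e2 ≠ 0 : use first coordinates as parameters
    have build : ∀ za zb zc : ℝ×ℝ, e1*za.1+e2*za.2 = m → e1*zb.1+e2*zb.2 = m →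
        e1*zc.1+e2*zc.2 = m →
        0 < (zb.1 - za.1)*(zc.1 - zb.1) → zb ∈ openSegment ℝ za zc := by
      intro za zb zc ka kb kc hmid
      have hca : zc.1 - za.1 ≠ 0 := by
        intro h
        have hz : zc.1 = za.1 := by linarith
        rw [hz] at hmid
        nlinarith [sq_nonneg (zb.1 - za.1)]
      set A : ℝ := (zc.1 - zb.1)/(zc.1 - za.1) with hA
      set B : ℝ := (zb.1 - za.1)/(zc.1 - za.1) with hB
      have hApos : 0 < A := div_pos_iff.2 (mul_pos_iff.1 (by nlinarith [hmid, sq_nonneg (zc.1 - zb.1)]))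
      have hBpos : 0 < B := div_pos_iff.2 (mul_pos_iff.1 (by nlinarith [hmid, sq_nonneg (zb.1 - za.1)]))
      have hsum : A + B = 1 := by rw [hA, hB]; field_simp; ring
      have hfst : A*za.1 + B*zc.1 = zb.1 := by rw [hA, hB]; field_simp; ring
      have hsnd : A*za.2 + B*zc.2 = zb.2 := by
        have h2' : e2*(A*za.2 + B*zc.2 - zb.2) = 0 := by
          linear_combination A*ka + B*kc - kb - e1*hfst + m*hsum
        rcases mul_eq_zero.1 h2' with h | h
        · exact absurd h he2
        · linarith
      exact ⟨A, B, hApos, hBpos, hsum, Prod.ext_iff.2 ⟨hfst, hsnd⟩⟩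
    have r12 : z1.1 ≠ z2.1 := by
      intro h
      apply h12
      refine Prod.ext_iff.2 ⟨h, ?_⟩
      have : e2*z1.2 = e2*z2.2 := by rw [h] at h1; linarith
      exact mul_left_cancel₀ he2 this
    have r13 : z1.1 ≠ z3.1 := by
      intro h
      apply h13
      refine Prod.ext_iff.2 ⟨h, ?_⟩
      have : e2*z1.2 = e2*z3.2 := by rw [h] at h1; linarith
      exact mul_left_cancel₀ he2 this
    have r23 : z2.1 ≠ z3.1 := by
      intro h
      apply h23
      refine Prod.ext_iff.2 ⟨h, ?_⟩
      have : e2*z2.2 = e2*z3.2 := by rw [h] at h2; linarith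
      exact mul_left_cancel₀ he2 this
    rcases middle_reals r12 r13 r23 with h | h | h
    · exact Or.inl (build z2 z1 z3 h2 h1 h3 (by nlinarith))
    · exact Or.inr (Or.inl (build z1 z2 z3 h1 h2 h3 (by nlinarith)))
    · exact Or.inr (Or.inr (build z1 z3 z2 h1 h3 h2 (by nlinarith)))

lemma inner_three {P Q : Set (ℝ×ℝ)} (hdisj : Disjoint P Q) {q₀ : ℝ×ℝ} (hq₀ : q₀ ∈ Q)
    {L1 L2 L3 : Set (ℝ×ℝ)} (hne12 : L1 ≠ L2) (hne13 : L1 ≠ L3) (hne23 : L2 ≠ L3)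
    {n1 n2 n3 : ℝ×ℝ} {c1 c2 c3 : ℝ}
    (hn1 : n1 ≠ 0) (hn2 : n2 ≠ 0) (hn3 : n3 ≠ 0)
    (hE1 : L1 = {p : ℝ×ℝ | n1.1*p.1+n1.2*p.2 = c1})
    (hE2 : L2 = {p : ℝ×ℝ | n2.1*p.1+n2.2*p.2 = c2})
    (hE3 : L3 = {p : ℝ×ℝ | n3.1*p.1+n3.2*p.2 = c3})
    {x1 x2 x3 y1 y2 y3 : ℝ×ℝ}
    (hx1P : x1 ∈ P) (hx2P : x2 ∈ P) (hx3P : x3 ∈ P)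
    (hy1Q : y1 ∈ Q) (hy2Q : y2 ∈ Q) (hy3Q : y3 ∈ Q)
    (hx1 : n1.1*x1.1+n1.2*x1.2 = c1) (hx2 : n2.1*x2.1+n2.2*x2.2 = c2) (hx3 : n3.1*x3.1+n3.2*x3.2 = c3)
    (hy1 : n1.1*y1.1+n1.2*y1.2 = c1) (hy2 : n2.1*y2.1+n2.2*y2.2 = c2) (hy3 : n3.1*y3.1+n3.2*y3.2 = c3)
    (hP1 : ∀ p ∈ P, n1.1*p.1+n1.2*p.2 ≤ c1) (hP2 : ∀ p ∈ P, n2.1*p.1+n2.2*p.2 ≤ c2)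
    (hP3 : ∀ p ∈ P, n3.1*p.1+n3.2*p.2 ≤ c3)
    (hQ1 : ∀ q ∈ Q, c1 ≤ n1.1*q.1+n1.2*q.2) (hQ2 : ∀ q ∈ Q, c2 ≤ n2.1*q.1+n2.2*q.2)
    (hQ3 : ∀ q ∈ Q, c3 ≤ n3.1*q.1+n3.2*q.2)
    (hs1 : c1 < n1.1*q₀.1+n1.2*q₀.2) (hs2 : c2 < n2.1*q₀.1+n2.2*q₀.2)
    (hs3 : c3 < n3.1*q₀.1+n3.2*q₀.2) : False := by
  have hd12 : n1.1*n2.2 - n1.2*n2.1 ≠ 0 :=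
    det_ne hq₀ hne12 hn1 hn2 hE1 hE2 hx1P hx2P hx1 hx2 hP1 hP2 hQ2 hs1
  have hd13 : n1.1*n3.2 - n1.2*n3.1 ≠ 0 :=
    det_ne hq₀ hne13 hn1 hn3 hE1 hE3 hx1P hx3P hx1 hx3 hP1 hP3 hQ3 hs1
  have hd23 : n2.1*n3.2 - n2.2*n3.1 ≠ 0 :=
    det_ne hq₀ hne23 hn2 hn3 hE2 hE3 hx2P hx3P hx2 hx3 hP2 hP3 hQ3 hs2
  set s1 : ℝ := n2.1*n3.2 - n2.2*n3.1 with hS1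
  set s2 : ℝ := -(n1.1*n3.2 - n1.2*n3.1) with hS2
  set s3 : ℝ := n1.1*n2.2 - n1.2*n2.1 with hS3
  have hr1 : s1*n1.1 + s2*n2.1 + s3*n3.1 = 0 := by rw [hS1, hS2, hS3]; ring
  have hr2 : s1*n1.2 + s2*n2.2 + s3*n3.2 = 0 := by rw [hS1, hS2, hS3]; ring
  have hs1' : s1 ≠ 0 := hd23
  have hs2' : s2 ≠ 0 := by rw [hS2]; exact neg_ne_zero.2 hd13
  have hs3' : s3 ≠ 0 := hd12
  have hxy1 : x1 ≠ y1 := fun h => Set.disjoint_left.1 hdisj hx1P (h ▸ hy1Q)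
  have hxy2 : x2 ≠ y2 := fun h => Set.disjoint_left.1 hdisj hx2P (h ▸ hy2Q)
  have hxy3 : x3 ≠ y3 := fun h => Set.disjoint_left.1 hdisj hx3P (h ▸ hy3Q)
  have hk1 : n1.1*x1.1+n1.2*x1.2 = n1.1*y1.1+n1.2*y1.2 := by rw [hx1, hy1]
  have hk2 : n2.1*x2.1+n2.2*x2.2 = n2.1*y2.1+n2.2*y2.2 := by rw [hx2, hy2]
  have hk3 : n3.1*x3.1+n3.2*x3.2 = n3.1*y3.1+n3.2*y3.2 := by rw [hx3, hy3]
  rcases hs1'.lt_or_gt with g1 | g1 <;> rcases hs2'.lt_or_gt with g2 | g2 <;>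
    rcases hs3'.lt_or_gt with g3 | g3
  -- (-,-,-) : flip, pair (1,2), k = 3
  · exact innerKey (ni := n1) (nj := n2) (nk := n3) (si := -s1) (sj := -s2) (sk := -s3)
      (by linarith) (by linarith) (by linarith) (by linarith) hd12 hxy3 hk3
      (hP1 x3 hx3P) (hQ1 y3 hy3Q) (hP2 x3 hx3P) (hQ2 y3 hy3Q)
  -- (-,-,+) : flip, pair (1,2), k = 3
  · exact innerKey (ni := n1) (nj := n2) (nk := n3) (si := -s1) (sj := -s2) (sk := -s3)
      (by linarith) (by linarith) (by linarith) (by linarith) hd12 hxy3 hk3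
      (hP1 x3 hx3P) (hQ1 y3 hy3Q) (hP2 x3 hx3P) (hQ2 y3 hy3Q)
  -- (-,+,-) : flip pair (1,3), k = 2
  · exact innerKey (ni := n1) (nj := n3) (nk := n2) (si := -s1) (sj := -s3) (sk := -s2)
      (by linarith) (by linarith) (by linarith) (by linarith) hd13 hxy2 hk2
      (hP1 x2 hx2P) (hQ1 y2 hy2Q) (hP3 x2 hx2P) (hQ3 y2 hy2Q)
  -- (-,+,+) : pair (2,3), k = 1
  · exact innerKey (ni := n2) (nj := n3) (nk := n1) (si := s2) (sj := s3) (sk := s1)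
      (by linarith) (by linarith) g2 g3 hd23 hxy1 hk1
      (hP2 x1 hx1P) (hQ2 y1 hy1Q) (hP3 x1 hx1P) (hQ3 y1 hy1Q)
  -- (+,-,-) : flip pair (2,3), k = 1
  · exact innerKey (ni := n2) (nj := n3) (nk := n1) (si := -s2) (sj := -s3) (sk := -s1)
      (by linarith) (by linarith) (by linarith) (by linarith) hd23 hxy1 hk1
      (hP2 x1 hx1P) (hQ2 y1 hy1Q) (hP3 x1 hx1P) (hQ3 y1 hy1Q)
  -- (+,-,+) : pair (1,3), k = 2
  · exact innerKey (ni := n1) (nj := n3) (nk := n2) (si := s1) (sj := s3) (sk := s2)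
      (by linarith) (by linarith) g1 g3 hd13 hxy2 hk2
      (hP1 x2 hx2P) (hQ1 y2 hy2Q) (hP3 x2 hx2P) (hQ3 y2 hy2Q)
  -- (+,+,-) : pair (1,2), k = 3
  · exact innerKey (ni := n1) (nj := n2) (nk := n3) (si := s1) (sj := s2) (sk := s3)
      hr1 hr2 g1 g2 hd12 hxy3 hk3
      (hP1 x3 hx3P) (hQ1 y3 hy3Q) (hP2 x3 hx3P) (hQ2 y3 hy3Q)
  -- (+,+,+) : pair (1,2), k = 3
  · exact innerKey (ni := n1) (nj := n2) (nk := n3) (si := s1) (sj := s2) (sk := s3)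
      hr1 hr2 g1 g2 hd12 hxy3 hk3
      (hP1 x3 hx3P) (hQ1 y3 hy3Q) (hP2 x3 hx3P) (hQ2 y3 hy3Q)

lemma outer_three {P Q : Set (ℝ×ℝ)} (hPconv : Convex ℝ P) (hQconv : Convex ℝ Q)
    (hPcomp : IsCompact P) (hQcomp : IsCompact Q) (hdisj : Disjoint P Q)
    {L1 L2 L3 : Set (ℝ×ℝ)} (hne12 : L1 ≠ L2) (hne13 : L1 ≠ L3) (hne23 : L2 ≠ L3)
    (hI1 : IsLine L1) (hI2 : IsLine L2) (hI3 : IsLine L3)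
    {n1 n2 n3 : ℝ×ℝ} {c1 c2 c3 : ℝ}
    (hE1 : L1 = {p : ℝ×ℝ | n1.1*p.1+n1.2*p.2 = c1})
    (hE2 : L2 = {p : ℝ×ℝ | n2.1*p.1+n2.2*p.2 = c2})
    (hE3 : L3 = {p : ℝ×ℝ | n3.1*p.1+n3.2*p.2 = c3})
    {x1 x2 x3 y1 y2 y3 : ℝ×ℝ}
    (hx1P : x1 ∈ P) (hx2P : x2 ∈ P) (hx3P : x3 ∈ P)
    (hy1Q : y1 ∈ Q) (hy2Q : y2 ∈ Q) (hy3Q : y3 ∈ Q)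
    (hx1 : n1.1*x1.1+n1.2*x1.2 = c1) (hx2 : n2.1*x2.1+n2.2*x2.2 = c2) (hx3 : n3.1*x3.1+n3.2*x3.2 = c3)
    (hy1 : n1.1*y1.1+n1.2*y1.2 = c1) (hy2 : n2.1*y2.1+n2.2*y2.2 = c2) (hy3 : n3.1*y3.1+n3.2*y3.2 = c3)
    (hP1 : ∀ p ∈ P, n1.1*p.1+n1.2*p.2 ≤ c1) (hP2 : ∀ p ∈ P, n2.1*p.1+n2.2*p.2 ≤ c2)
    (hP3 : ∀ p ∈ P, n3.1*p.1+n3.2*p.2 ≤ c3)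
    (hQ1 : ∀ q ∈ Q, n1.1*q.1+n1.2*q.2 ≤ c1) (hQ2 : ∀ q ∈ Q, n2.1*q.1+n2.2*q.2 ≤ c2)
    (hQ3 : ∀ q ∈ Q, n3.1*q.1+n3.2*q.2 ≤ c3) : False := by
  obtain ⟨f, u, v, hfu, huv, hfv⟩ :=
    geometric_hahn_banach_compact_closed hPconv hPcomp hQconv hQcomp.isClosed hdisj
  have hf : ∀ p : ℝ×ℝ, f p = f (1,0)*p.1 + f (0,1)*p.2 := by
    intro p
    have hp : p = p.1 • ((1:ℝ),(0:ℝ)) + p.2 • ((0:ℝ),(1:ℝ)) := by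
      apply Prod.ext_iff.2; constructor <;> simp
    conv_lhs => rw [hp]
    rw [map_add, map_smul, map_smul, smul_eq_mul, smul_eq_mul]
    ring
  set e1 : ℝ := f (1,0) with hE1'
  set e2 : ℝ := f (0,1) with hE2'
  set m : ℝ := (u+v)/2 with hm
  have hP' : ∀ p ∈ P, e1*p.1+e2*p.2 < m := by
    intro p hp
    have := hfu p hp
    rw [hf] at this
    linarith
  have hQ' : ∀ q ∈ Q, m < e1*q.1+e2*q.2 := by
    intro q hq
    have := hfv q hq
    rw [hf] at this
    linarith
  have he : ¬(e1 = 0 ∧ e2 = 0) := by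
    rintro ⟨h1, h2⟩
    have ha := hP' x1 hx1P
    have hb := hQ' y1 hy1Q
    rw [h1, h2] at ha hb
    linarith
  -- construct crossing points
  have mk : ∀ x y : ℝ×ℝ, x ∈ P → y ∈ Q → ∃ t : ℝ, 0 < t ∧ t < 1 ∧
      e1*((1-t)*x.1+t*y.1)+e2*((1-t)*x.2+t*y.2) = m := by
    intro x y hx hy
    have hfx : e1*x.1+e2*x.2 < m := hP' x hx
    have hfy : m < e1*y.1+e2*y.2 := hQ' y hy
    have hden : 0 < (e1*y.1+e2*y.2) - (e1*x.1+e2*x.2) := by linarith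
    refine ⟨(m - (e1*x.1+e2*x.2))/((e1*y.1+e2*y.2) - (e1*x.1+e2*x.2)),
      div_pos (by linarith) hden, (div_lt_one hden).2 (by linarith), ?_⟩
    field_simp
    ring
  obtain ⟨t1, ht1a, ht1b, hz1m⟩ := mk x1 y1 hx1P hy1Q
  obtain ⟨t2, ht2a, ht2b, hz2m⟩ := mk x2 y2 hx2P hy2Q
  obtain ⟨t3, ht3a, ht3b, hz3m⟩ := mk x3 y3 hx3P hy3Q
  set z1 : ℝ×ℝ := ((1-t1)*x1.1+t1*y1.1, (1-t1)*x1.2+t1*y1.2) with hz1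
  set z2 : ℝ×ℝ := ((1-t2)*x2.1+t2*y2.1, (1-t2)*x2.2+t2*y2.2) with hz2
  set z3 : ℝ×ℝ := ((1-t3)*x3.1+t3*y3.1, (1-t3)*x3.2+t3*y3.2) with hz3
  -- z_i on its own line
  have hz1L : n1.1*z1.1+n1.2*z1.2 = c1 := by
    rw [hz1]; linear_combination (1-t1)*hx1 + t1*hy1
  have hz2L : n2.1*z2.1+n2.2*z2.2 = c2 := by
    rw [hz2]; linear_combination (1-t2)*hx2 + t2*hy2
  have hz3L : n3.1*z3.1+n3.2*z3.2 = c3 := by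
    rw [hz3]; linear_combination (1-t3)*hx3 + t3*hy3
  -- z_i in every halfplane
  have hhalf : ∀ (nj : ℝ×ℝ) (cj : ℝ), (∀ p ∈ P, nj.1*p.1+nj.2*p.2 ≤ cj) →
      (∀ q ∈ Q, nj.1*q.1+nj.2*q.2 ≤ cj) →
      ∀ (x y : ℝ×ℝ) (t : ℝ), x ∈ P → y ∈ Q → 0 < t → t < 1 →
      nj.1*((1-t)*x.1+t*y.1)+nj.2*((1-t)*x.2+t*y.2) ≤ cj := by
    intro nj cj hP hQ x y t hx hy ht0 ht1
    have ha := hP x hx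
    have hb := hQ y hy
    nlinarith [mul_nonneg ht0.le (sub_nonneg.2 hb), mul_nonneg (by linarith : (0:ℝ) ≤ 1-t) (sub_nonneg.2 ha)]
  -- distinctness of crossing points
  have hzne : ∀ (Li Lj : Set (ℝ×ℝ)), IsLine Li → IsLine Lj → Li ≠ Lj →
      ∀ (ni nj : ℝ×ℝ) (ci cj : ℝ), Li = {p : ℝ×ℝ | ni.1*p.1+ni.2*p.2 = ci} →
      Lj = {p : ℝ×ℝ | nj.1*p.1+nj.2*p.2 = cj} →
      ∀ (xi yi : ℝ×ℝ) (ti : ℝ), xi ∈ P → yi ∈ Q →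
      ni.1*xi.1+ni.2*xi.2 = ci → ni.1*yi.1+ni.2*yi.2 = ci →
      nj.1*xi.1+nj.2*xi.2 ≤ cj → nj.1*yi.1+nj.2*yi.2 ≤ cj →
      0 < ti → ti < 1 →
      nj.1*((1-ti)*xi.1+ti*yi.1)+nj.2*((1-ti)*xi.2+ti*yi.2) = cj → False := by
    intro Li Lj hIi hIj hneij ni nj ci cj hEi hEj xi yi ti hxiP hyiQ hxi hyi hxj hyj ht0 ht1 heq
    obtain ⟨hXc, hYc⟩ := combo_eq hxj hyj ht0 ht1 (by linear_combination heq)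
    have hxyne : xi ≠ yi := fun h => Set.disjoint_left.1 hdisj hxiP (h ▸ hyiQ)
    exact hneij (line_eq_of_two_pts hIi hIj hxyne
      (by rw [hEi]; exact hxi) (by rw [hEi]; exact hyi)
      (by rw [hEj]; exact hXc) (by rw [hEj]; exact hYc))
  have hne12' : z1 ≠ z2 := by
    intro h
    apply hzne L1 L2 hI1 hI2 hne12 n1 n2 c1 c2 hE1 hE2 x1 y1 t1 hx1P hy1Q hx1 hy1
      (hP2 x1 hx1P) (hQ2 y1 hy1Q) ht1a ht1b
    have : n2.1*z1.1+n2.2*z1.2 = c2 := by rw [h]; exact hz2L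
    rw [hz1] at this; exact this
  have hne13' : z1 ≠ z3 := by
    intro h
    apply hzne L1 L3 hI1 hI3 hne13 n1 n3 c1 c3 hE1 hE3 x1 y1 t1 hx1P hy1Q hx1 hy1
      (hP3 x1 hx1P) (hQ3 y1 hy1Q) ht1a ht1b
    have : n3.1*z1.1+n3.2*z1.2 = c3 := by rw [h]; exact hz3L
    rw [hz1] at this; exact this
  have hne23' : z2 ≠ z3 := by
    intro h
    apply hzne L2 L3 hI2 hI3 hne23 n2 n3 c2 c3 hE2 hE3 x2 y2 t2 hx2P hy2Q hx2 hy2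
      (hP3 x2 hx2P) (hQ3 y2 hy2Q) ht2a ht2b
    have : n3.1*z2.1+n3.2*z2.2 = c3 := by rw [h]; exact hz3L
    rw [hz2] at this; exact this
  -- m-line facts
  have hm1 : e1*z1.1+e2*z1.2 = m := by rw [hz1]; exact hz1m
  have hm2 : e1*z2.1+e2*z2.2 = m := by rw [hz2]; exact hz2m
  have hm3 : e1*z3.1+e2*z3.2 = m := by rw [hz3]; exact hz3m
  -- half-plane memberships needed
  have h12 : n2.1*z1.1+n2.2*z1.2 ≤ c2 := by
    rw [hz1]; exact hhalf n2 c2 hP2 hQ2 x1 y1 t1 hx1P hy1Q ht1a ht1b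
  have h13 : n3.1*z1.1+n3.2*z1.2 ≤ c3 := by
    rw [hz1]; exact hhalf n3 c3 hP3 hQ3 x1 y1 t1 hx1P hy1Q ht1a ht1b
  have h21 : n1.1*z2.1+n1.2*z2.2 ≤ c1 := by
    rw [hz2]; exact hhalf n1 c1 hP1 hQ1 x2 y2 t2 hx2P hy2Q ht2a ht2b
  have h23 : n3.1*z2.1+n3.2*z2.2 ≤ c3 := by
    rw [hz2]; exact hhalf n3 c3 hP3 hQ3 x2 y2 t2 hx2P hy2Q ht2a ht2b
  have h31 : n1.1*z3.1+n1.2*z3.2 ≤ c1 := by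
    rw [hz3]; exact hhalf n1 c1 hP1 hQ1 x3 y3 t3 hx3P hy3Q ht3a ht3b
  have h32 : n2.1*z3.1+n2.2*z3.2 ≤ c2 := by
    rw [hz3]; exact hhalf n2 c2 hP2 hQ2 x3 y3 t3 hx3P hy3Q ht3a ht3b
  -- x_j not on the m-line
  have hx1m : e1*x1.1+e2*x1.2 ≠ m := ne_of_lt (hP' x1 hx1P)
  have hx2m : e1*x2.1+e2*x2.2 ≠ m := ne_of_lt (hP' x2 hx2P)
  have hx3m : e1*x3.1+e2*x3.2 ≠ m := ne_of_lt (hP' x3 hx3P)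
  have hx1L : x1 ∈ L1 := by rw [hE1]; exact hx1
  have hx2L : x2 ∈ L2 := by rw [hE2]; exact hx2
  have hx3L : x3 ∈ L3 := by rw [hE3]; exact hx3
  rcases middle_z he hm1 hm2 hm3 hne12' hne13' hne23' with h | h | h
  · exact outerKey hI1 hE1 he h hne23' h21 h31 hz1L hm2 hm3 hx1L hx1m
  · exact outerKey hI2 hE2 he h hne13' h12 h32 hz2L hm1 hm3 hx2L hx2m
  · exact outerKey hI3 hE3 he h hne12' h13 h23 hz3L hm1 hm2 hx3L hx3m

end Helpers

/-- Two disjoint bounded convex bodies in the plane have at most 4 common tangent lines. -/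
theorem stmt3 (P Q : Set (ℝ × ℝ)) (hPconv : Convex ℝ P) (hQconv : Convex ℝ Q)
    (hPcomp : IsCompact P) (hQcomp : IsCompact Q)
    (hPint : (interior P).Nonempty) (hQint : (interior Q).Nonempty)
    (hdisj : Disjoint P Q)
    (S : Finset (Set (ℝ × ℝ)))
    (hS : ∀ L ∈ S, IsLine L ∧ IsTangentLine L P ∧ IsTangentLine L Q) :
    S.card ≤ 4 := by
  classical
  obtain ⟨q₀, hq₀i⟩ := hQint
  have hq₀Q : q₀ ∈ Q := interior_subset hq₀i
  have extract : ∀ L : Set (ℝ×ℝ), ∃ (n : ℝ×ℝ) (c : ℝ) (x y : ℝ×ℝ),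
      L ∈ S → (n ≠ 0 ∧ L = {p : ℝ×ℝ | n.1*p.1+n.2*p.2 = c} ∧
        x ∈ P ∧ y ∈ Q ∧ n.1*x.1+n.2*x.2 = c ∧ n.1*y.1+n.2*y.2 = c ∧
        (∀ p ∈ P, n.1*p.1+n.2*p.2 ≤ c) ∧
        ((∀ q ∈ Q, n.1*q.1+n.2*q.2 ≤ c) ∨
          ((∀ q ∈ Q, c ≤ n.1*q.1+n.2*q.2) ∧ c < n.1*q₀.1+n.2*q₀.2))) := by
    intro L
    by_cases hL : L ∈ S
    · obtain ⟨⟨a, b, cc, hab, hLeq⟩, ⟨hPne, hPi⟩, ⟨hQne, hQi⟩⟩ := hS L hL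
      obtain ⟨x, hxmem⟩ := hPne
      obtain ⟨y, hymem⟩ := hQne
      have hxL : a*x.1+b*x.2 = cc := by
        have := hxmem.1; rw [hLeq] at this; exact this
      have hyL : a*y.1+b*y.2 = cc := by
        have := hymem.1; rw [hLeq] at this; exact this
      have hdP : {p : ℝ×ℝ | a*p.1+b*p.2 = cc} ∩ interior P = ∅ := by rw [← hLeq]; exact hPi
      rcases tangent_normal hPconv hPint a b cc hdP with hside | hside
      · -- P below: n = (a,b)
        refine ⟨(a,b), cc, x, y, fun _ => ⟨hab, hLeq, hxmem.2, hymem.2, hxL, hyL, hside, ?_⟩⟩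
        have hdQ : {p : ℝ×ℝ | a*p.1+b*p.2 = cc} ∩ interior Q = ∅ := by rw [← hLeq]; exact hQi
        rcases tangent_normal hQconv ⟨q₀, hq₀i⟩ a b cc hdQ with hq | hq
        · exact Or.inl hq
        · refine Or.inr ⟨hq, lt_of_le_of_ne (hq q₀ hq₀Q) (Ne.symm ?_)⟩
          intro h
          have : q₀ ∈ ({p : ℝ×ℝ | a*p.1+b*p.2 = cc} ∩ interior Q) := ⟨h, hq₀i⟩
          rw [hdQ] at this; exact this
      · -- P above: n = (-a,-b)
        have hab' : ((-a,-b) : ℝ×ℝ) ≠ 0 := by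
          intro h
          apply hab
          have h1 : -a = 0 := congrArg Prod.fst h
          have h2 : -b = 0 := congrArg Prod.snd h
          exact Prod.ext_iff.2 ⟨by simp only; linarith, by simp only; linarith⟩
        have hLeq' : L = {p : ℝ×ℝ | (-a)*p.1+(-b)*p.2 = -cc} := by
          rw [hLeq]; ext p; simp only [Set.mem_setOf_eq]
          constructor <;> intro <;> linarith
        refine ⟨(-a,-b), -cc, x, y, fun _ => ⟨hab', hLeq', hxmem.2, hymem.2,
          by simp only; linarith, by simp only; linarith, ?_, ?_⟩⟩
        · intro p hp
          have := hside p hp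
          simp only; linarith
        · have hdQ : {p : ℝ×ℝ | (-a)*p.1+(-b)*p.2 = -cc} ∩ interior Q = ∅ := by
            rw [← hLeq']; exact hQi
          rcases tangent_normal hQconv ⟨q₀, hq₀i⟩ (-a) (-b) (-cc) hdQ with hq | hq
          · exact Or.inl hq
          · refine Or.inr ⟨hq, lt_of_le_of_ne (hq q₀ hq₀Q) (Ne.symm ?_)⟩
            intro h
            have : q₀ ∈ ({p : ℝ×ℝ | (-a)*p.1+(-b)*p.2 = -cc} ∩ interior Q) := ⟨h, hq₀i⟩
            rw [hdQ] at this; exact this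
    · exact ⟨(1,0), 0, 0, 0, fun h => absurd h hL⟩
  choose nf cf xf yf hdata using extract
  set Sout := S.filter (fun L => ∀ q ∈ Q, (nf L).1*q.1+(nf L).2*q.2 ≤ cf L) with hSout
  set Sin := S.filter (fun L => ¬ ∀ q ∈ Q, (nf L).1*q.1+(nf L).2*q.2 ≤ cf L) with hSin
  have hsplit : Sout.card + Sin.card = S.card :=
    Finset.card_filter_add_card_filter_not _
  have hout : Sout.card ≤ 2 := by
    by_contra hgt
    push_neg at hgt
    obtain ⟨A, B, C, hA, hB, hC, hAB, hAC, hBC⟩ := Finset.two_lt_card_iff.1 hgt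
    rw [hSout, Finset.mem_filter] at hA hB hC
    obtain ⟨hnA, hEA, hxPA, hyQA, hxlA, hylA, hPA, _⟩ := hdata A hA.1
    obtain ⟨hnB, hEB, hxPB, hyQB, hxlB, hylB, hPB, _⟩ := hdata B hB.1
    obtain ⟨hnC, hEC, hxPC, hyQC, hxlC, hylC, hPC, _⟩ := hdata C hC.1
    exact outer_three hPconv hQconv hPcomp hQcomp hdisj hAB hAC hBC
      (hS A hA.1).1 (hS B hB.1).1 (hS C hC.1).1 hEA hEB hEC
      hxPA hxPB hxPC hyQA hyQB hyQC hxlA hxlB hxlC hylA hylB hylC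
      hPA hPB hPC hA.2 hB.2 hC.2
  have hin : Sin.card ≤ 2 := by
    by_contra hgt
    push_neg at hgt
    obtain ⟨A, B, C, hA, hB, hC, hAB, hAC, hBC⟩ := Finset.two_lt_card_iff.1 hgt
    rw [hSin, Finset.mem_filter] at hA hB hC
    obtain ⟨hnA, hEA, hxPA, hyQA, hxlA, hylA, hPA, horA⟩ := hdata A hA.1
    obtain ⟨hnB, hEB, hxPB, hyQB, hxlB, hylB, hPB, horB⟩ := hdata B hB.1
    obtain ⟨hnC, hEC, hxPC, hyQC, hxlC, hylC, hPC, horC⟩ := hdata C hC.1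
    rcases horA with h | ⟨hQA, hsA⟩
    · exact hA.2 h
    rcases horB with h | ⟨hQB, hsB⟩
    · exact hB.2 h
    rcases horC with h | ⟨hQC, hsC⟩
    · exact hC.2 h
    exact inner_three hdisj hq₀Q hAB hAC hBC hnA hnB hnC hEA hEB hEC
      hxPA hxPB hxPC hyQA hyQB hyQC hxlA hxlB hxlC hylA hylB hylC
      hPA hPB hPC hQA hQB hQC hsA hsB hsC
  omega
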